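/- arXiv:2302.04673 — 2 statements merged into one kernel-verified Lean document; each statement's English description precedes it below -/
import Mathlib

section
/- Schubert varieties are ℚ-algebraic: For every partition λ = (λ_1,…,λ_m) with n ≥ λ_1 ≥ ⋯ ≥ λ_m ≥ 0, the Schubert variety σ_λ ⊆ G_{m,n} (defined by the incidence conditions with respect to the canonical complete flag of ℝ^{m+n}) is a projectively ℚ-closed ℚ-algebraic subset of ℝ^{(m+n)²}; that is, σ_λ is the common zero set of finitely many polynomials with rational coefficients, and in fact the zero set of a single overt polynomial with rational coefficients. -/
open MvPolynomial

noncomputable section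

variable {ι κ : Type*} [Fintype ι] [DecidableEq ι] [Fintype κ]

/-- `V ⊆ ℝ^ι` is a `ℚ`-algebraic set: the common zero set of finitely many
polynomials with rational coefficients. -/
def IsQAlgebraicSet (V : Set (ι → ℝ)) : Prop :=
  ∃ S : Finset (MvPolynomial ι ℚ), V = {x : ι → ℝ | ∀ p ∈ S, aeval x p = 0}

/-- The gradient of a polynomial with rational coefficients at a real point. -/
def polyGradQ (p : MvPolynomial ι ℚ) (a : ι → ℝ) : ι → ℝ :=
  fun i => aeval a (pderiv i p)

/-- `V` is a `d`-dimensional `C^∞` submanifold of `ℝ^ι`: near each of its points it is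
the regular zero set of a `C^∞` submersion with values in `ℝ^(card ι - d)`. -/
def IsSmoothSubmanifold (d : ℕ) (V : Set (ι → ℝ)) : Prop :=
  ∀ a ∈ V, ∃ (U : Set (ι → ℝ)) (f : (ι → ℝ) → (Fin (Fintype.card ι - d) → ℝ)),
    IsOpen U ∧ a ∈ U ∧ ContDiffOn ℝ (⊤ : ℕ∞) f U ∧
    (∀ x ∈ U, Function.Surjective (fderiv ℝ f x)) ∧
    V ∩ U = {x ∈ U | f x = 0}

/-- `V` is a `ℚ`-nonsingular `ℚ`-algebraic set of dimension `d`. -/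
def IsQNonsingular (d : ℕ) (V : Set (ι → ℝ)) : Prop :=
  IsQAlgebraicSet V ∧ IsSmoothSubmanifold d V ∧
    ∀ a ∈ V, ∃ q : Fin (Fintype.card ι - d) → MvPolynomial ι ℚ,
      (∀ j, ∀ x ∈ V, aeval x (q j) = 0) ∧
      LinearIndependent ℝ (fun j => polyGradQ (q j) a) ∧
      ∃ U : Set (ι → ℝ), IsOpen U ∧ a ∈ U ∧
        V ∩ U = {x ∈ U | ∀ j, aeval x (q j) = 0}

/-- A real polynomial is overt if the zero set of its top-degree homogeneous
component is contained in `{0}`. -/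
def IsOvert (p : MvPolynomial ι ℝ) : Prop :=
  ∀ x : ι → ℝ, eval x (homogeneousComponent p.totalDegree p) = 0 → x = 0

/-- `V` is projectively `ℚ`-closed: the zero set of a single overt polynomial with
rational coefficients. -/
def IsProjQClosed (V : Set (ι → ℝ)) : Prop :=
  ∃ p : MvPolynomial ι ℚ, IsOvert (MvPolynomial.map (algebraMap ℚ ℝ) p) ∧
    V = {x : ι → ℝ | aeval x p = 0}

/-- `V ⊆ ℝ^ι` is a real algebraic set. -/
def IsRAlgebraicSet (V : Set (ι → ℝ)) : Prop :=
  ∃ S : Finset (MvPolynomial ι ℝ), V = {x : ι → ℝ | ∀ p ∈ S, eval x p = 0}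

/-- The gradient of a real polynomial at a point. -/
def polyGradR (p : MvPolynomial ι ℝ) (a : ι → ℝ) : ι → ℝ :=
  fun i => eval a (pderiv i p)

/-- `V` is a nonsingular real algebraic set of dimension `d`. -/
def IsNonsingularRAlgebraic (d : ℕ) (V : Set (ι → ℝ)) : Prop :=
  IsRAlgebraicSet V ∧ IsSmoothSubmanifold d V ∧
    ∀ a ∈ V, ∃ q : Fin (Fintype.card ι - d) → MvPolynomial ι ℝ,
      (∀ j, ∀ x ∈ V, eval x (q j) = 0) ∧
      LinearIndependent ℝ (fun j => polyGradR (q j) a) ∧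
      ∃ U : Set (ι → ℝ), IsOpen U ∧ a ∈ U ∧
        V ∩ U = {x ∈ U | ∀ j, eval x (q j) = 0}

/-- The tangent space of `M` at `a`, realized as the span of the tangent cone. -/
def tangentSpan (M : Set (ι → ℝ)) (a : ι → ℝ) : Submodule ℝ (ι → ℝ) :=
  Submodule.span ℝ (tangentConeAt ℝ M a)

/-- The submanifolds `Ms i` of `M`, of codimensions `c i`, are in general position. -/
def InGeneralPosition {ℓ : ℕ} (M : Set (ι → ℝ)) (Ms : Fin ℓ → Set (ι → ℝ))
    (c : Fin ℓ → ℕ) : Prop :=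
  ∀ α : Finset (Fin ℓ), α.Nonempty → ∀ a : ι → ℝ, (∀ i ∈ α, a ∈ Ms i) →
    Module.finrank ℝ ↥(⨅ i ∈ α, tangentSpan (Ms i) a) + ∑ i ∈ α, c i
      = Module.finrank ℝ ↥(tangentSpan M a)

/-- A `ℚ`-regular map on `S`: each component is a quotient of polynomials with
rational coefficients whose denominator does not vanish on `S`. -/
def IsQRegularMap (S : Set (ι → ℝ)) (g : (ι → ℝ) → κ → ℝ) : Prop :=
  ∀ j : κ, ∃ p q : MvPolynomial ι ℚ, (∀ x ∈ S, aeval x q ≠ 0) ∧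
    ∀ x ∈ S, g x j = aeval x p / aeval x q

/-- A map whose components are restrictions of polynomials with rational coefficients. -/
def IsQPolynomialMap {κ' : Type*} (S : Set (ι → ℝ)) (g : (ι → ℝ) → κ' → ℝ) : Prop :=
  ∀ j : κ', ∃ p : MvPolynomial ι ℚ, ∀ x ∈ S, g x j = aeval x p

/-- `f` restricts to a `C^∞` diffeomorphism from `A` onto `B`. -/
def IsSmoothDiffeoOn (f : (ι → ℝ) → κ → ℝ) (A : Set (ι → ℝ)) (B : Set (κ → ℝ)) : Prop :=
  Set.BijOn f A B ∧ ContDiffOn ℝ (⊤ : ℕ∞) f A ∧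
    ∃ g : (κ → ℝ) → ι → ℝ, ContDiffOn ℝ (⊤ : ℕ∞) g B ∧ Set.InvOn g f A B

/-- `L` is a `ℚ`-nice `ℚ`-algebraic set. -/
def IsQNice (L : Set (ι → ℝ)) : Prop :=
  ∀ a ∈ L, ∃ U : Set (ι → ℝ), IsOpen U ∧ a ∈ U ∧
    ∀ f : (ι → ℝ) → ℝ, ContDiff ℝ (⊤ : ℕ∞) f → (∀ x ∈ L, f x = 0) →
      ∃ (s : ℕ) (pp : Fin s → MvPolynomial ι ℚ) (u : Fin s → (ι → ℝ) → ℝ),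
        (∀ i, ∀ x ∈ L, aeval x (pp i) = 0) ∧
        (∀ i, ContDiffOn ℝ (⊤ : ℕ∞) (u i) U) ∧
        ∀ x ∈ U, f x = ∑ i, u i x * aeval x (pp i)

/-- Inclusion `ℝ^a ⊆ ℝ^b` via the first `a` coordinates. -/
def inclZero {a b : ℕ} (_ : a ≤ b) (x : Fin a → ℝ) : Fin b → ℝ :=
  fun j => if hj : (j : ℕ) < a then x ⟨j, hj⟩ else 0

/-- Reading a point of `ℝ^(k×k)` as a `k × k` matrix. -/
def matOf {k : ℕ} (x : Fin k × Fin k → ℝ) : Matrix (Fin k) (Fin k) ℝ :=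
  Matrix.of fun i j => x (i, j)

/-- The symmetric idempotent matrices of size `k` and trace `r`. -/
def GrassMatrix (k r : ℕ) : Set (Matrix (Fin k) (Fin k) ℝ) :=
  {X | X.transpose = X ∧ X * X = X ∧ X.trace = (r : ℝ)}

/-- The Grassmannian `G_{m,n}` embedded in `ℝ^{(m+n)²}`. -/
def Grass (m n : ℕ) : Set (Fin (m + n) × Fin (m + n) → ℝ) :=
  {x | matOf x ∈ GrassMatrix (m + n) m}

/-- The diagonal matrix `D_ℓ` with `1` in the first `ℓ` diagonal entries and `0` elsewhere. -/
def stdProj (k ℓ : ℕ) : Matrix (Fin k) (Fin k) ℝ :=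
  Matrix.diagonal fun i => if (i : ℕ) < ℓ then 1 else 0

/-- The coordinate subspace `ℝ^ℓ ⊆ ℝ^k` (first `ℓ` coordinates). -/
def coordSubspace (k ℓ : ℕ) : Submodule ℝ (Fin k → ℝ) :=
  ⨅ i ∈ {i : Fin k | ℓ ≤ (i : ℕ)},
    LinearMap.ker (LinearMap.proj (R := ℝ) (φ := fun _ : Fin k => ℝ) i)

/-- The column space of a square matrix. -/
def colSpace {k : ℕ} (X : Matrix (Fin k) (Fin k) ℝ) : Submodule ℝ (Fin k → ℝ) :=
  LinearMap.range X.mulVecLin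

/-- `lam` is a partition inside the `m × n` rectangle. -/
def IsPartitionIn (n : ℕ) {m : ℕ} (lam : Fin m → ℕ) : Prop :=
  (∀ k, lam k ≤ n) ∧ Antitone lam

/-- The Schubert variety `σ_λ ⊆ G_{m,n}` with respect to the canonical complete flag. -/
def SchubertVariety (m n : ℕ) (lam : Fin m → ℕ) :
    Set (Fin (m + n) × Fin (m + n) → ℝ) :=
  {x | x ∈ Grass m n ∧ ∀ k : Fin m,
    ((matOf x - 1) * stdProj (m + n) (n + ((k : ℕ) + 1) - lam k)).rank ≤ n - lam k}

/-- `λ_{k+1}`, with the convention `λ_{m+1} = 0`. -/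
def lamNext {m : ℕ} (lam : Fin m → ℕ) (k : Fin m) : ℕ :=
  if h : (k : ℕ) + 1 < m then lam ⟨(k : ℕ) + 1, h⟩ else 0

/-- The open Schubert cell `Ω_λ ⊆ G_{m,n}` with respect to the canonical complete flag. -/
def SchubertCell (m n : ℕ) (lam : Fin m → ℕ) :
    Set (Fin (m + n) × Fin (m + n) → ℝ) :=
  {x | x ∈ Grass m n ∧ ∀ k : Fin m, ∀ ℓ : ℕ,
    n + ((k : ℕ) + 1) - lam k ≤ ℓ → ℓ ≤ n + ((k : ℕ) + 1) - lamNext lam k →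
    Module.finrank ℝ ↥(colSpace (matOf x) ⊓ coordSubspace (m + n) ℓ) = (k : ℕ) + 1}

/-- `f 0 + ⋯ + f (t-1)` for `f : Fin c → ℕ`. -/
def partialSum {c : ℕ} (f : Fin c → ℕ) (t : ℕ) : ℕ :=
  ∑ i ∈ Finset.univ.filter (fun i : Fin c => (i : ℕ) < t), f i

/-- The `j`-th matrix slot of a point of `(ℝ^{k×k})^c`. -/
def matSlot {c k : ℕ} (z : Fin c × (Fin k × Fin k) → ℝ) (j : Fin c) :
    Matrix (Fin k) (Fin k) ℝ :=
  Matrix.of fun p q => z (j, (p, q))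

/-- The embedded Bott–Samelson set `Z_λ`, with slot `0` carrying `X` and slot `k`
(`1 ≤ k ≤ c-1`) carrying `Y_k`. -/
def BottSamelson (m n c : ℕ) (hc : 0 < c) (a b : Fin c → ℕ) :
    Set (Fin c × (Fin (m + n) × Fin (m + n)) → ℝ) :=
  {z | matSlot z ⟨0, hc⟩ ∈ GrassMatrix (m + n) m ∧
    (∀ j : Fin c, 0 < (j : ℕ) →
      matSlot z j ∈ GrassMatrix (m + n) (partialSum a (j : ℕ)) ∧
      matSlot z j * stdProj (m + n) (partialSum a (j : ℕ) + partialSum b (j : ℕ))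
        = matSlot z j) ∧
    (∀ (j : Fin c), 0 < (j : ℕ) → ∀ (h2 : (j : ℕ) + 1 < c),
      matSlot z ⟨(j : ℕ) + 1, h2⟩ * matSlot z j = matSlot z j) ∧
    (∀ j : Fin c, 0 < (j : ℕ) → (j : ℕ) = c - 1 →
      matSlot z ⟨0, hc⟩ * matSlot z j = matSlot z j)}

end

section Helpers
open MvPolynomial Matrix
noncomputable section

set_option maxHeartbeats 1000000

/-- Conjugation invariance of the characteristic polynomial. -/
lemma myCharpolyConj {k : ℕ} (U M V : Matrix (Fin k) (Fin k) ℝ)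
    (hUV : U * V = 1) : (U * M * V).charpoly = M.charpoly := by
  have hcomm : ∀ W : Matrix (Fin k) (Fin k) (Polynomial ℝ),
      Matrix.scalar (Fin k) (Polynomial.X : Polynomial ℝ) * W
        = W * Matrix.scalar (Fin k) (Polynomial.X : Polynomial ℝ) :=
    fun W => (Matrix.scalar_commute _ (fun r' => Commute.all _ r') W).eq
  have hch : Matrix.charmatrix (U * M * V)
      = (Polynomial.C.mapMatrix U) * Matrix.charmatrix M * (Polynomial.C.mapMatrix V) := by
    rw [Matrix.charmatrix, Matrix.charmatrix, mul_sub, sub_mul]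
    congr 1
    · rw [show (Polynomial.C.mapMatrix U) * Matrix.scalar (Fin k) (Polynomial.X : Polynomial ℝ)
          = Matrix.scalar (Fin k) (Polynomial.X : Polynomial ℝ) * (Polynomial.C.mapMatrix U) from
          (hcomm _).symm, mul_assoc, ← _root_.map_mul, hUV, _root_.map_one, mul_one]
    · rw [← _root_.map_mul, ← _root_.map_mul]
  rw [Matrix.charpoly, Matrix.charpoly, hch, Matrix.det_mul, Matrix.det_mul]
  have : (Polynomial.C.mapMatrix U).det * (Polynomial.C.mapMatrix V).det = 1 := by
    rw [← Matrix.det_mul, ← _root_.map_mul, hUV, _root_.map_one, Matrix.det_one]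
  calc (Polynomial.C.mapMatrix U).det * (Matrix.charmatrix M).det * (Polynomial.C.mapMatrix V).det
      = (Matrix.charmatrix M).det * ((Polynomial.C.mapMatrix U).det * (Polynomial.C.mapMatrix V).det) := by ring
    _ = (Matrix.charmatrix M).det := by rw [this, mul_one]

lemma myCharpolyDiagonal {k : ℕ} (d : Fin k → ℝ) :
    (Matrix.diagonal d).charpoly = ∏ i, (Polynomial.X - Polynomial.C (d i)) := by
  have : Matrix.charmatrix (Matrix.diagonal d)
      = Matrix.diagonal (fun i => (Polynomial.X : Polynomial ℝ) - Polynomial.C (d i)) := by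
    ext i j
    by_cases h : i = j
    · subst h; simp
    · simp [Matrix.charmatrix_apply_ne _ _ _ h, Matrix.diagonal_apply_ne _ h]
  rw [Matrix.charpoly, this, Matrix.det_diagonal]

lemma myCharpolyEig {k : ℕ} {B : Matrix (Fin k) (Fin k) ℝ} (hB : B.IsHermitian) :
    B.charpoly = ∏ i, (Polynomial.X - Polynomial.C (hB.eigenvalues i)) := by
  have hs := hB.spectral_theorem
  have hd : (RCLike.ofReal ∘ hB.eigenvalues : Fin k → ℝ) = hB.eigenvalues := by
    funext i; simp
  rw [hd] at hs
  have h1 : (hB.eigenvectorUnitary : Matrix (Fin k) (Fin k) ℝ)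
      * (star (hB.eigenvectorUnitary : Matrix (Fin k) (Fin k) ℝ)) = 1 :=
    Matrix.mem_unitaryGroup_iff.mp hB.eigenvectorUnitary.2
  conv_lhs => rw [hs]
  rw [Unitary.conjStarAlgAut_apply, myCharpolyConj _ _ _ h1, myCharpolyDiagonal]


lemma myRankLeIffCoeff {k r : ℕ} {B : Matrix (Fin k) (Fin k) ℝ} (hB : B.IsHermitian) :
    B.rank ≤ r ↔ ∀ j, j < k - r → B.charpoly.coeff j = 0 := by
  classical
  set μ := hB.eigenvalues with hμ
  have hcard : Multiset.card (Finset.univ.val.map μ) = k := by simp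
  have hch : B.charpoly = ((Finset.univ.val.map μ).map fun t => Polynomial.X - Polynomial.C t).prod := by
    rw [myCharpolyEig hB, ← hμ, Multiset.map_map]
    rfl
  have hcoeff : ∀ j, j ≤ k → B.charpoly.coeff j
      = (-1 : ℝ)^(k-j) * ((Finset.powersetCard (k-j) Finset.univ).sum fun t => t.prod μ) := by
    intro j hj
    rw [hch, Multiset.prod_X_sub_C_coeff _ (by rw [hcard]; exact hj), hcard, Finset.esymm_map_val]
  set N := Finset.univ.filter (fun i => μ i ≠ 0) with hN
  have hrank : B.rank = N.card := by
    rw [hB.rank_eq_card_non_zero_eigs, Fintype.card_subtype]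
  have hNk : N.card ≤ k := le_trans (Finset.card_le_univ N) (by simp)
  constructor
  · intro hr j hj
    have hjk : j ≤ k := by omega
    rw [hcoeff j hjk]
    have hzero : ∀ t ∈ Finset.powersetCard (k-j) Finset.univ, t.prod μ = 0 := by
      intro t ht
      have htc : t.card = k - j := Finset.mem_powersetCard_univ.mp ht
      have hns : ¬ t ⊆ N := by
        intro hsub
        have := Finset.card_le_card hsub
        omega
      obtain ⟨i, hit, hiN⟩ := Finset.not_subset.mp hns
      refine Finset.prod_eq_zero hit ?_
      by_contra h0
      exact hiN (Finset.mem_filter.mpr ⟨Finset.mem_univ _, h0⟩)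
    rw [Finset.sum_eq_zero hzero, mul_zero]
  · intro h
    by_contra hr
    push_neg at hr
    have hj : k - N.card < k - r := by omega
    have h0 := h _ hj
    rw [hcoeff _ (by omega)] at h0
    have hks : k - (k - N.card) = N.card := by omega
    rw [hks] at h0
    have hsum : ((Finset.powersetCard N.card Finset.univ).sum fun t => t.prod μ) = N.prod μ := by
      refine Finset.sum_eq_single_of_mem N (Finset.mem_powersetCard_univ.mpr rfl) ?_
      intro t ht hne
      have htc : t.card = N.card := Finset.mem_powersetCard_univ.mp ht
      have hns : ¬ t ⊆ N := fun hsub => hne (Finset.eq_of_subset_of_card_le hsub (le_of_eq htc.symm))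
      obtain ⟨i, hit, hiN⟩ := Finset.not_subset.mp hns
      refine Finset.prod_eq_zero hit ?_
      by_contra h0'
      exact hiN (Finset.mem_filter.mpr ⟨Finset.mem_univ _, h0'⟩)
    rw [hsum] at h0
    have hne : N.prod μ ≠ 0 := Finset.prod_ne_zero_iff.mpr (fun i hi => (Finset.mem_filter.mp hi).2)
    rcases mul_eq_zero.mp h0 with h' | h'
    · exact pow_ne_zero _ (by norm_num : (-1:ℝ) ≠ 0) h'
    · exact hne h'

lemma myRankLeIff {k r : ℕ} (A : Matrix (Fin k) (Fin k) ℝ) :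
    A.rank ≤ r ↔ ∀ j, j < k - r → (Aᵀ * A).charpoly.coeff j = 0 := by
  have hH : (Aᵀ * A).IsHermitian := by
    have := Matrix.isHermitian_conjTranspose_mul_self A
    simpa using this
  rw [← Matrix.rank_transpose_mul_self A]
  exact myRankLeIffCoeff hH


lemma myProjQClosedAux {ι : Type*} [Fintype ι] [DecidableEq ι] [Nonempty ι]
    (S : Finset (MvPolynomial ι ℚ)) (c : ℚ) (V : Set (ι → ℝ))
    (hV : V = {x | ∀ p ∈ S, aeval x p = 0})
    (hs : ∀ x ∈ V, ∑ i, x i ^ 2 = (c : ℝ)) : IsProjQClosed V := by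
  classical
  set q : MvPolynomial ι ℚ := ∑ p ∈ S, p ^ 2 with hq
  set N : ℕ := q.totalDegree + 1 with hNdef
  set s : MvPolynomial ι ℚ := ∑ i, X i ^ 2 with hsdef
  set P : MvPolynomial ι ℚ := q + (s - C c) ^ (2 * N) with hPdef
  have hrat : (algebraMap ℚ ℝ) c = (c : ℝ) := by
    exact eq_ratCast (algebraMap ℚ ℝ) c
  have key : ∀ x : ι → ℝ, aeval x P
      = (∑ p ∈ S, (aeval x p) ^ 2) + ((∑ i, x i ^ 2) - (c : ℝ)) ^ (2 * N) := by
    intro x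
    simp [hPdef, hq, hsdef, hrat]
  -- zero set
  have hzero : V = {x : ι → ℝ | aeval x P = 0} := by
    ext x
    simp only [Set.mem_setOf_eq, key x]
    constructor
    · intro hx
      have h1 : ∀ p ∈ S, aeval x p = 0 := by rw [hV] at hx; exact hx
      have h2 : (∑ i, x i ^ 2) = (c : ℝ) := hs x hx
      rw [Finset.sum_eq_zero (fun p hp => by rw [h1 p hp]; ring), h2, sub_self, zero_add]
      exact zero_pow (by omega)
    · intro hx
      have hA : (0:ℝ) ≤ ∑ p ∈ S, (aeval x p) ^ 2 :=
        Finset.sum_nonneg fun p _ => sq_nonneg _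
      have hB : (0:ℝ) ≤ ((∑ i, x i ^ 2) - (c : ℝ)) ^ (2 * N) := by
        have : ((∑ i, x i ^ 2) - (c : ℝ)) ^ (2 * N) = (((∑ i, x i ^ 2) - (c : ℝ)) ^ 2) ^ N := by
          rw [← pow_mul, mul_comm]
        rw [this]
        exact pow_nonneg (sq_nonneg _) N
      have hA0 : ∑ p ∈ S, (aeval x p) ^ 2 = 0 := by linarith
      rw [hV]
      intro p hp
      have := (Finset.sum_eq_zero_iff_of_nonneg (fun p _ => sq_nonneg (aeval x p))).mp hA0 p hp
      exact pow_eq_zero_iff (n := 2) (by norm_num) |>.mp this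
  -- overtness
  set φ := algebraMap ℚ ℝ with hφ
  set Sr : MvPolynomial ι ℝ := ∑ i, X i ^ 2 with hSrdef
  set T : MvPolynomial ι ℝ := Sr ^ (2 * N) with hTdef
  set Qr : MvPolynomial ι ℝ := MvPolynomial.map φ q with hQr
  set E : MvPolynomial ι ℝ := Qr + ((Sr - C (c:ℝ)) ^ (2 * N) - T) with hEdef
  have hmaps : MvPolynomial.map φ s = Sr := by
    simp [hsdef, hSrdef]
  have hP : MvPolynomial.map φ P = Qr + (Sr - C (c:ℝ)) ^ (2 * N) := by
    rw [hPdef, map_add, map_pow, map_sub, hmaps, MvPolynomial.map_C, hrat, hQr]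
  have hPr : MvPolynomial.map φ P = T + E := by rw [hP, hEdef]; ring
  -- degrees
  have hdegQr : Qr.totalDegree ≤ q.totalDegree :=
    Finset.sup_mono (support_map_subset φ q)
  have hdegSr : Sr.totalDegree ≤ 2 := by
    refine le_trans (totalDegree_finset_sum _ _) (Finset.sup_le fun i _ => ?_)
    rw [totalDegree_X_pow]
  have hdegdiff : ((Sr - C (c:ℝ)) ^ (2 * N) - T).totalDegree ≤ 2 * (2 * N) - 2 := by
    have hbin : (Sr - C (c:ℝ)) ^ (2 * N)
        = (∑ j ∈ Finset.range (2 * N),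
            Sr ^ j * (-C (c:ℝ)) ^ (2 * N - j) * (Nat.choose (2 * N) j : MvPolynomial ι ℝ)) + T := by
      rw [sub_eq_add_neg, add_pow, Finset.sum_range_succ]
      simp [hTdef]
    rw [hbin, add_sub_cancel_right]
    refine le_trans (totalDegree_finset_sum _ _) (Finset.sup_le fun j hj => ?_)
    have hj' : j < 2 * N := Finset.mem_range.mp hj
    have h1 : ((-C (c:ℝ) : MvPolynomial ι ℝ) ^ (2 * N - j)).totalDegree = 0 := by
      refine Nat.eq_zero_of_le_zero (le_trans (totalDegree_pow _ _) ?_)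
      rw [totalDegree_neg, totalDegree_C, Nat.mul_zero]
    have h2 : ((Nat.choose (2 * N) j : MvPolynomial ι ℝ)).totalDegree = 0 := by
      rw [← MvPolynomial.C_eq_coe_nat]
      exact totalDegree_C _
    refine le_trans (totalDegree_mul _ _) ?_
    rw [h2, add_zero]
    refine le_trans (totalDegree_mul _ _) ?_
    rw [h1, add_zero]
    refine le_trans (totalDegree_pow _ _) ?_
    have := Nat.mul_le_mul_left j hdegSr
    omega
  have hN1 : 1 ≤ N := by omega
  have hdegE : E.totalDegree < 2 * (2 * N) := by
    refine lt_of_le_of_lt (totalDegree_add _ _) ?_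
    rw [max_lt_iff]
    constructor
    · omega
    · omega
  -- T is nonzero homogeneous of degree 2*(2*N)
  have hSrhom : Sr.IsHomogeneous 2 := by
    refine IsHomogeneous.sum _ _ _ fun i _ => ?_
    simpa using (isHomogeneous_X ℝ i).pow 2
  have hThom : T.IsHomogeneous (2 * (2 * N)) := by
    simpa [mul_comm] using hSrhom.pow (2 * N)
  have hSrne : Sr ≠ 0 := by
    intro h0
    have h1 : eval (fun _ => (1:ℝ)) Sr = Fintype.card ι := by
      simp [hSrdef]
    rw [h0, map_zero] at h1
    exact Fintype.card_ne_zero (by exact_mod_cast h1.symm)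
  have hT0 : T ≠ 0 := pow_ne_zero _ hSrne
  have hcomp : homogeneousComponent (2 * (2 * N)) (MvPolynomial.map φ P) = T := by
    rw [hPr, map_add, homogeneousComponent_of_mem ((mem_homogeneousSubmodule _ _).mpr hThom),
      homogeneousComponent_eq_zero _ _ hdegE, add_zero, if_pos rfl]
  have hdegT : T.totalDegree = 2 * (2 * N) := hThom.totalDegree hT0
  have hdeg : (MvPolynomial.map φ P).totalDegree = 2 * (2 * N) := by
    refine le_antisymm ?_ ?_
    · rw [hPr]
      refine le_trans (totalDegree_add _ _) ?_
      rw [max_le_iff]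
      exact ⟨le_of_eq hdegT, le_of_lt hdegE⟩
    · by_contra hlt
      push_neg at hlt
      exact hT0 (by rw [← hcomp, homogeneousComponent_eq_zero _ _ hlt])
  refine ⟨P, ?_, hzero⟩
  intro x hx
  rw [hdeg, hcomp, hTdef, map_pow] at hx
  have hSx : eval x Sr = ∑ i, x i ^ 2 := by simp [hSrdef]
  rw [hSx] at hx
  have hsum0 : ∑ i, x i ^ 2 = 0 := by
    exact pow_eq_zero_iff (by omega) |>.mp hx
  funext i
  have := (Finset.sum_eq_zero_iff_of_nonneg (fun i _ => sq_nonneg (x i))).mp hsum0 i (Finset.mem_univ i)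
  exact pow_eq_zero_iff (n := 2) (by norm_num) |>.mp this


-- generic matrix machinery
def XgM (K : ℕ) : Matrix (Fin K) (Fin K) (MvPolynomial (Fin K × Fin K) ℚ) :=
  Matrix.of fun i j => X (i, j)

def symPolyQ (K : ℕ) (p : Fin K × Fin K) : MvPolynomial (Fin K × Fin K) ℚ :=
  X p - X (p.2, p.1)

def idemPolyQ (K : ℕ) (p : Fin K × Fin K) : MvPolynomial (Fin K × Fin K) ℚ :=
  (XgM K * XgM K) p.1 p.2 - X p

def trPolyQ (K m : ℕ) : MvPolynomial (Fin K × Fin K) ℚ :=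
  (∑ i : Fin K, X (i, i)) - C (m : ℚ)

def DPolyQ (K ℓ : ℕ) : Matrix (Fin K) (Fin K) (MvPolynomial (Fin K × Fin K) ℚ) :=
  Matrix.diagonal fun i => if (i : ℕ) < ℓ then 1 else 0

def BPolyQ (K ℓ : ℕ) : Matrix (Fin K) (Fin K) (MvPolynomial (Fin K × Fin K) ℚ) :=
  ((XgM K - 1) * DPolyQ K ℓ)ᵀ * ((XgM K - 1) * DPolyQ K ℓ)

def coeffPolyQ (K ℓ j : ℕ) : MvPolynomial (Fin K × Fin K) ℚ :=
  (BPolyQ K ℓ).charpoly.coeff j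

lemma map_XgM (K : ℕ) (x : Fin K × Fin K → ℝ) :
    (XgM K).map ⇑((aeval x : MvPolynomial (Fin K × Fin K) ℚ →ₐ[ℚ] ℝ).toRingHom) = matOf x := by
  ext i j
  simp [XgM, matOf]

lemma map_BPolyQ (K ℓ : ℕ) (x : Fin K × Fin K → ℝ) :
    (BPolyQ K ℓ).map ⇑((aeval x : MvPolynomial (Fin K × Fin K) ℚ →ₐ[ℚ] ℝ).toRingHom)
      = ((matOf x - 1) * stdProj K ℓ)ᵀ * ((matOf x - 1) * stdProj K ℓ) := by
  set f : MvPolynomial (Fin K × Fin K) ℚ →+* ℝ :=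
    (aeval x : MvPolynomial (Fin K × Fin K) ℚ →ₐ[ℚ] ℝ).toRingHom with hf
  have hD : (DPolyQ K ℓ).map ⇑f = stdProj K ℓ := by
    rw [DPolyQ, stdProj, Matrix.diagonal_map (map_zero f)]
    refine congrArg Matrix.diagonal (funext fun i => ?_)
    by_cases hi : (i : ℕ) < ℓ
    · simp [hi]
    · simp [hi]
  have hA : ((XgM K - 1) * DPolyQ K ℓ).map ⇑f = (matOf x - 1) * stdProj K ℓ := by
    rw [Matrix.map_mul, Matrix.map_sub ⇑f (fun a b => map_sub f a b),
      Matrix.map_one ⇑f (map_zero f) (map_one f), map_XgM, hD]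
  rw [BPolyQ, Matrix.map_mul, Matrix.transpose_map, hA]

lemma aeval_coeffPolyQ (K ℓ j : ℕ) (x : Fin K × Fin K → ℝ) :
    aeval x (coeffPolyQ K ℓ j)
      = ((((matOf x - 1) * stdProj K ℓ)ᵀ * ((matOf x - 1) * stdProj K ℓ)).charpoly).coeff j := by
  have h := Matrix.charpoly_map (BPolyQ K ℓ)
    ((aeval x : MvPolynomial (Fin K × Fin K) ℚ →ₐ[ℚ] ℝ).toRingHom)
  rw [map_BPolyQ] at h
  rw [coeffPolyQ, h, Polynomial.coeff_map]
  rfl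

end
end Helpers

/-- **Schubert varieties are projectively `ℚ`-closed `ℚ`-algebraic sets.** -/
theorem schubertVariety_isQAlgebraic_isProjQClosed
    (m n : ℕ) (lam : Fin m → ℕ) (hpart : IsPartitionIn n lam) :
    IsQAlgebraicSet (SchubertVariety m n lam) ∧
    IsProjQClosed (SchubertVariety m n lam) := by
  classical
  rcases Nat.eq_zero_or_pos (m + n) with hmn | hmn
  · -- degenerate case : `ℝ^0`
    haveI : IsEmpty (Fin (m + n)) := ⟨fun i => absurd i.isLt (by omega)⟩
    have hm0 : m = 0 := by omega
    have hσ : SchubertVariety m n lam = Set.univ := by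
      ext x
      simp only [SchubertVariety, Grass, GrassMatrix, Set.mem_setOf_eq, Set.mem_univ, iff_true]
      refine ⟨⟨?_, ?_, ?_⟩, ?_⟩
      · ext i j; exact absurd i.isLt (by omega)
      · ext i j; exact absurd i.isLt (by omega)
      · simp [Matrix.trace, hm0]
      · intro k; exact absurd k.isLt (by omega)
    constructor
    · refine ⟨∅, ?_⟩
      rw [hσ]; ext x; simp
    · refine ⟨0, ?_, ?_⟩
      · rw [map_zero]
        intro x _
        funext p
        exact absurd p.1.isLt (by omega)
      · rw [hσ]; ext x; simp
  · -- main case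
    haveI hne : Nonempty (Fin (m + n) × Fin (m + n)) := ⟨(⟨0, hmn⟩, ⟨0, hmn⟩)⟩
    set S : Finset (MvPolynomial (Fin (m + n) × Fin (m + n)) ℚ) :=
      ((Finset.univ : Finset (Fin (m + n) × Fin (m + n))).image (symPolyQ (m + n))) ∪
      ((Finset.univ : Finset (Fin (m + n) × Fin (m + n))).image (idemPolyQ (m + n))) ∪
      {trPolyQ (m + n) m} ∪
      (Finset.univ : Finset (Fin m)).biUnion (fun kk =>
        (Finset.range ((m + n) - (n - lam kk))).image
          (fun j => coeffPolyQ (m + n) (n + ((kk : ℕ) + 1) - lam kk) j)) with hS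
    have hmem : ∀ x : Fin (m + n) × Fin (m + n) → ℝ, (∀ p ∈ S, aeval x p = 0) ↔
        ((∀ p : Fin (m + n) × Fin (m + n), aeval x (symPolyQ (m + n) p) = 0) ∧
         (∀ p : Fin (m + n) × Fin (m + n), aeval x (idemPolyQ (m + n) p) = 0) ∧
         aeval x (trPolyQ (m + n) m) = 0 ∧
         ∀ kk : Fin m, ∀ j, j < (m + n) - (n - lam kk) →
           aeval x (coeffPolyQ (m + n) (n + ((kk : ℕ) + 1) - lam kk) j) = 0) := by
      intro x
      constructor
      · intro h
        refine ⟨fun p => h _ ?_, fun p => h _ ?_, h _ ?_, fun kk j hj => h _ ?_⟩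
        · exact Finset.mem_union_left _ (Finset.mem_union_left _ (Finset.mem_union_left _
            (Finset.mem_image_of_mem _ (Finset.mem_univ p))))
        · exact Finset.mem_union_left _ (Finset.mem_union_left _ (Finset.mem_union_right _
            (Finset.mem_image_of_mem _ (Finset.mem_univ p))))
        · exact Finset.mem_union_left _ (Finset.mem_union_right _ (Finset.mem_singleton_self _))
        · exact Finset.mem_union_right _ (Finset.mem_biUnion.mpr
            ⟨kk, Finset.mem_univ _, Finset.mem_image_of_mem _ (Finset.mem_range.mpr hj)⟩)
      · rintro ⟨h1, h2, h3, h4⟩ p hp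
        rcases Finset.mem_union.mp hp with hp | hp
        · rcases Finset.mem_union.mp hp with hp | hp
          · rcases Finset.mem_union.mp hp with hp | hp
            · obtain ⟨q, _, rfl⟩ := Finset.mem_image.mp hp; exact h1 q
            · obtain ⟨q, _, rfl⟩ := Finset.mem_image.mp hp; exact h2 q
          · rw [Finset.mem_singleton.mp hp]; exact h3
        · obtain ⟨kk, _, hp2⟩ := Finset.mem_biUnion.mp hp
          obtain ⟨j, hj, rfl⟩ := Finset.mem_image.mp hp2
          exact h4 kk j (Finset.mem_range.mp hj)
    have hsym : ∀ (x : Fin (m + n) × Fin (m + n) → ℝ) (p : Fin (m + n) × Fin (m + n)),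
        aeval x (symPolyQ (m + n) p) = x p - x (p.2, p.1) := by
      intro x p; simp [symPolyQ]
    have hidem : ∀ (x : Fin (m + n) × Fin (m + n) → ℝ) (p : Fin (m + n) × Fin (m + n)),
        aeval x (idemPolyQ (m + n) p) = (matOf x * matOf x) p.1 p.2 - x p := by
      intro x p
      simp [idemPolyQ, XgM, Matrix.mul_apply, matOf]
    have htr : ∀ x : Fin (m + n) × Fin (m + n) → ℝ,
        aeval x (trPolyQ (m + n) m) = (matOf x).trace - (m : ℝ) := by
      intro x
      simp [trPolyQ, Matrix.trace, Matrix.diag, matOf]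
    have hset : SchubertVariety m n lam = {x | ∀ p ∈ S, aeval x p = 0} := by
      ext x
      rw [Set.mem_setOf_eq, hmem x]
      simp only [SchubertVariety, Grass, GrassMatrix, Set.mem_setOf_eq]
      constructor
      · rintro ⟨⟨hT, hI, htrace⟩, hrank⟩
        refine ⟨?_, ?_, ?_, ?_⟩
        · intro p
          rw [hsym]
          have h := Matrix.ext_iff.mpr hT p.1 p.2
          rw [Matrix.transpose_apply] at h
          show x p - x (p.2, p.1) = 0
          have e1 : matOf x p.2 p.1 = x (p.2, p.1) := rfl
          have e2 : matOf x p.1 p.2 = x (p.1, p.2) := rfl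
          rw [e1, e2] at h
          rw [← h]
          simp [sub_self]
        · intro p
          rw [hidem, hI]
          show matOf x p.1 p.2 - x p = 0
          have e2 : matOf x p.1 p.2 = x (p.1, p.2) := rfl
          rw [e2]
          simp [sub_self]
        · rw [htr, htrace, sub_self]
        · intro kk j hj
          rw [aeval_coeffPolyQ]
          exact (myRankLeIff _).mp (hrank kk) j hj
      · rintro ⟨h1, h2, h3, h4⟩
        have hT : (matOf x).transpose = matOf x := by
          ext i j
          have h := h1 (i, j)
          rw [hsym] at h
          have : x (i, j) = x (j, i) := by
            have := sub_eq_zero.mp h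
            simpa using this
          rw [Matrix.transpose_apply]
          show x (j, i) = x (i, j)
          exact this.symm
        have hI : matOf x * matOf x = matOf x := by
          ext i j
          have h := h2 (i, j)
          rw [hidem] at h
          exact sub_eq_zero.mp h
        have htrace : (matOf x).trace = (m : ℝ) := by
          have h := h3
          rw [htr] at h
          linarith [sub_eq_zero.mp h]
        refine ⟨⟨hT, hI, htrace⟩, ?_⟩
        intro kk
        refine (myRankLeIff _).mpr ?_
        intro j hj
        rw [← aeval_coeffPolyQ]
        exact h4 kk j hj
    have hsumsq : ∀ x ∈ SchubertVariety m n lam,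
        ∑ p : Fin (m + n) × Fin (m + n), x p ^ 2 = (((m : ℚ) : ℝ)) := by
      intro x hx
      obtain ⟨⟨hT, hI, htrace⟩, -⟩ := hx
      have hsymm : ∀ i j, matOf x j i = matOf x i j := by
        intro i j
        have := Matrix.ext_iff.mpr hT i j
        rw [Matrix.transpose_apply] at this
        exact this
      have step1 : ∑ p : Fin (m + n) × Fin (m + n), x p ^ 2
          = ∑ i : Fin (m + n), ∑ j : Fin (m + n), matOf x i j ^ 2 := by
        rw [Fintype.sum_prod_type]
        rfl
      have step2 : ∀ i : Fin (m + n), ∑ j : Fin (m + n), matOf x i j ^ 2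
          = (matOf x * matOf x) i i := by
        intro i
        rw [Matrix.mul_apply]
        refine Finset.sum_congr rfl fun j _ => ?_
        rw [hsymm i j]
        ring
      rw [step1]
      calc ∑ i : Fin (m + n), ∑ j : Fin (m + n), matOf x i j ^ 2
          = ∑ i : Fin (m + n), (matOf x * matOf x) i i := by
            exact Finset.sum_congr rfl fun i _ => step2 i
        _ = ∑ i : Fin (m + n), matOf x i i := by rw [hI]
        _ = (matOf x).trace := rfl
        _ = (m : ℝ) := htrace
        _ = ((m : ℚ) : ℝ) := by push_cast; ring
    exact ⟨⟨S, hset⟩, myProjQClosedAux S (m : ℚ) _ hset hsumsq⟩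
end

section
/- Overt polynomials are proper: Let p ∈ ℝ[x_1,…,x_N] be a non-constant overt polynomial. Then the polynomial function p : ℝ^N → ℝ is proper, i.e. the preimage of every compact subset of ℝ is compact. Consequently, every projectively ℚ-closed ℚ-algebraic subset of ℝ^N is compact. -/
open MvPolynomial

lemma myEvalSmul {σ : Type*} (φ : MvPolynomial σ ℝ) {n : ℕ}
    (h : φ.IsHomogeneous n) (c : ℝ) (x : σ → ℝ) :
    eval (c • x) φ = c ^ n * eval x φ := by
  rw [eval_eq, eval_eq, Finset.mul_sum]
  refine Finset.sum_congr rfl fun d hd => ?_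
  have hdeg : ∑ i ∈ d.support, d i = n := by
    have h2 := h (MvPolynomial.mem_support_iff.mp hd)
    have h3 : Finsupp.degree d = n := by
      rw [Finsupp.degree_eq_weight_one]; exact h2
    exact h3
  calc coeff d φ * ∏ i ∈ d.support, (c • x) i ^ d i
      = coeff d φ * ((∏ i ∈ d.support, c ^ d i) * ∏ i ∈ d.support, x i ^ d i) := by
        rw [← Finset.prod_mul_distrib]
        simp [mul_pow]
    _ = c ^ n * (coeff d φ * ∏ i ∈ d.support, x i ^ d i) := by
        rw [Finset.prod_pow_eq_pow_sum, hdeg]; ring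

lemma myOvertBound {N : ℕ} (p : MvPolynomial (Fin N) ℝ)
    (hp : ∀ x : Fin N → ℝ, eval x (homogeneousComponent p.totalDegree p) = 0 → x = 0)
    (hd : p.totalDegree ≠ 0) (B : ℝ) :
    ∃ R : ℝ, ∀ x : Fin N → ℝ, R ≤ ‖x‖ → B < |eval x p| := by
  rcases isEmpty_or_nonempty (Fin N) with h | h
  · refine ⟨1, fun x hx => absurd hx ?_⟩
    rw [Subsingleton.elim x (0 : Fin N → ℝ), norm_zero]
    norm_num
  set e := p.totalDegree with he
  set q := homogeneousComponent e p with hq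
  have hS : IsCompact (Metric.sphere (0 : Fin N → ℝ) 1) := isCompact_sphere _ _
  have hSne : (Metric.sphere (0 : Fin N → ℝ) 1).Nonempty :=
    NormedSpace.sphere_nonempty.mpr zero_le_one
  obtain ⟨u₀, hu₀, hmin⟩ := hS.exists_isMinOn hSne
    ((continuous_abs.comp (MvPolynomial.continuous_eval q)).continuousOn)
  set m := |eval u₀ q| with hm
  have hm0 : 0 < m := by
    rw [hm, abs_pos]
    intro h0
    have := hp u₀ h0
    rw [this] at hu₀
    simp at hu₀
  set G : (Fin N → ℝ) → ℝ := fun u => ∑ i ∈ Finset.range e, |eval u (homogeneousComponent i p)|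
    with hG
  have hGcont : Continuous G := by
    apply continuous_finset_sum
    exact fun i _ => continuous_abs.comp (MvPolynomial.continuous_eval _)
  obtain ⟨M0, hM0⟩ := hS.exists_bound_of_continuousOn hGcont.continuousOn
  set M := max M0 0 with hMdef
  have hMnn : 0 ≤ M := le_max_right _ _
  have hGM : ∀ u ∈ Metric.sphere (0 : Fin N → ℝ) 1, G u ≤ M := fun u hu =>
    le_max_of_le_left <| (le_abs_self _).trans <| (Real.norm_eq_abs _ ▸ hM0 u hu)
  refine ⟨max 1 ((|B| + M) / m + 1), fun x hx => ?_⟩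
  set t := ‖x‖ with ht
  have ht1 : 1 ≤ t := le_trans (le_max_left _ _) hx
  have ht0 : 0 < t := lt_of_lt_of_le one_pos ht1
  have htm : (|B| + M) / m + 1 ≤ t := le_trans (le_max_right _ _) hx
  set u : Fin N → ℝ := t⁻¹ • x with hu
  have hxu : x = t • u := by rw [hu, smul_inv_smul₀ (ne_of_gt ht0)]
  have husphere : u ∈ Metric.sphere (0 : Fin N → ℝ) 1 := by
    simp only [Metric.mem_sphere, dist_zero_right, hu, norm_smul, norm_inv, Real.norm_eq_abs,
      abs_of_pos ht0]
    field_simp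
    exact ht.symm
  -- decomposition
  have hdecomp : eval x p = eval x q + ∑ i ∈ Finset.range e, eval x (homogeneousComponent i p) := by
    conv_lhs => rw [← MvPolynomial.sum_homogeneousComponent p]
    rw [map_sum, ← he, Finset.sum_range_succ, ← hq, add_comm]
  have hqeval : |eval x q| = t ^ e * |eval u q| := by
    rw [hxu, myEvalSmul q (homogeneousComponent_isHomogeneous e p) t u, abs_mul,
      abs_pow, abs_of_pos ht0]
  have hieval : ∀ i ∈ Finset.range e, |eval x (homogeneousComponent i p)|
      ≤ t ^ (e - 1) * |eval u (homogeneousComponent i p)| := by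
    intro i hi
    rw [hxu, myEvalSmul _ (homogeneousComponent_isHomogeneous i p) t u, abs_mul, abs_pow,
      abs_of_pos ht0]
    have : t ^ i ≤ t ^ (e - 1) :=
      pow_le_pow_right₀ ht1 (Nat.le_sub_one_of_lt (Finset.mem_range.mp hi))
    exact mul_le_mul_of_nonneg_right this (abs_nonneg _)
  have hsum : |∑ i ∈ Finset.range e, eval x (homogeneousComponent i p)| ≤ t ^ (e - 1) * M := by
    calc |∑ i ∈ Finset.range e, eval x (homogeneousComponent i p)|
        ≤ ∑ i ∈ Finset.range e, |eval x (homogeneousComponent i p)| :=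
          Finset.abs_sum_le_sum_abs _ _
      _ ≤ ∑ i ∈ Finset.range e, t ^ (e - 1) * |eval u (homogeneousComponent i p)| :=
          Finset.sum_le_sum hieval
      _ = t ^ (e - 1) * G u := by rw [hG, Finset.mul_sum]
      _ ≤ t ^ (e - 1) * M :=
          mul_le_mul_of_nonneg_left (hGM u husphere) (pow_nonneg (le_of_lt ht0) _)
  have hqlb : t ^ e * m ≤ |eval x q| := by
    rw [hqeval]
    exact mul_le_mul_of_nonneg_left (hmin husphere) (pow_nonneg (le_of_lt ht0) _)
  have hte : t ^ e = t ^ (e - 1) * t := by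
    rw [← pow_succ]
    congr 1
    omega
  have htpow1 : 1 ≤ t ^ (e - 1) := one_le_pow₀ ht1
  have htmM : |B| + m ≤ t * m - M := by
    have h1 : ((|B| + M) / m + 1) * m ≤ t * m :=
      mul_le_mul_of_nonneg_right htm (le_of_lt hm0)
    rw [add_mul, div_mul_cancel₀ _ (ne_of_gt hm0), one_mul] at h1
    linarith
  have hmain : |B| + m ≤ |eval x p| := by
    have h2 : |eval x q| - |∑ i ∈ Finset.range e, eval x (homogeneousComponent i p)|
        ≤ |eval x p| := by
      rw [hdecomp]
      have := abs_add_le (eval x q + ∑ i ∈ Finset.range e, eval x (homogeneousComponent i p))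
        (-(∑ i ∈ Finset.range e, eval x (homogeneousComponent i p)))
      simp only [add_neg_cancel_right, abs_neg] at this
      linarith
    have h3 : t ^ (e - 1) * (t * m - M) ≤ |eval x q| -
        |∑ i ∈ Finset.range e, eval x (homogeneousComponent i p)| := by
      have : t ^ (e - 1) * (t * m - M) = t ^ e * m - t ^ (e - 1) * M := by
        rw [hte]; ring
      rw [this]
      linarith
    have h4 : t * m - M ≤ t ^ (e - 1) * (t * m - M) := by
      nlinarith [htmM, abs_nonneg B, hm0]
    linarith
  have : B < |B| + m := lt_of_le_of_lt (le_abs_self B) (by linarith)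
  linarith

/-- **Overt polynomials are proper; projectively `ℚ`-closed sets are compact.** -/
theorem overt_proper_and_projQClosed_compact {N : ℕ} :
    (∀ p : MvPolynomial (Fin N) ℝ, IsOvert p → p.totalDegree ≠ 0 →
      ∀ K : Set ℝ, IsCompact K → IsCompact ((fun x : Fin N → ℝ => eval x p) ⁻¹' K)) ∧
    (∀ V : Set (Fin N → ℝ), IsProjQClosed V → IsCompact V) := by
  have part1 : ∀ p : MvPolynomial (Fin N) ℝ, IsOvert p → p.totalDegree ≠ 0 →
      ∀ K : Set ℝ, IsCompact K → IsCompact ((fun x : Fin N → ℝ => eval x p) ⁻¹' K) := by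
    intro p hp hd K hK
    obtain ⟨B, hB⟩ := hK.isBounded.subset_closedBall 0
    obtain ⟨R, hR⟩ := myOvertBound p hp hd B
    refine IsCompact.of_isClosed_subset (isCompact_closedBall (0 : Fin N → ℝ) R)
      (hK.isClosed.preimage (MvPolynomial.continuous_eval p)) ?_
    intro x hx
    simp only [Metric.mem_closedBall, dist_zero_right]
    by_contra hxc
    push_neg at hxc
    have h1 := hR x (le_of_lt hxc)
    have h2 : eval x p ∈ Metric.closedBall (0 : ℝ) B := hB hx
    rw [Metric.mem_closedBall, dist_zero_right, Real.norm_eq_abs] at h2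
    linarith
  refine ⟨part1, ?_⟩
  intro V hV
  obtain ⟨p, hov, hVeq⟩ := hV
  set p' := MvPolynomial.map (algebraMap ℚ ℝ) p with hp'
  have haev : ∀ x : Fin N → ℝ, aeval x p = eval x p' := by
    intro x
    rw [hp', MvPolynomial.eval_map, MvPolynomial.aeval_def]
  have hVeq' : V = (fun x : Fin N → ℝ => eval x p') ⁻¹' {0} := by
    rw [hVeq]
    ext x
    simp [haev x]
  by_cases hdeg : p'.totalDegree = 0
  · rcases isEmpty_or_nonempty (Fin N) with hemp | hne
    · haveI : Subsingleton (Fin N → ℝ) := inferInstance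
      haveI : Finite (Fin N → ℝ) := Finite.of_subsingleton
      exact (Set.toFinite V).isCompact
    · have hhom : p'.IsHomogeneous 0 := (totalDegree_zero_iff_isHomogeneous _).mp hdeg
      have hconst : ∀ x : Fin N → ℝ, eval x p' = eval (0 : Fin N → ℝ) p' := by
        intro x
        have := myEvalSmul p' hhom 0 x
        simpa using this.symm
      have hcomp : homogeneousComponent p'.totalDegree p' = p' := by
        rw [hdeg]
        exact homogeneousComponent_of_mem hhom ▸ (by simp [homogeneousComponent_of_mem hhom])
      have hne0 : eval (0 : Fin N → ℝ) p' ≠ 0 := by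
        intro h0
        obtain ⟨i⟩ := hne
        have hx1 : (fun _ : Fin N => (1 : ℝ)) = 0 := by
          apply hov
          rw [hcomp, hconst, h0]
        have := congrFun hx1 i
        norm_num at this
      have : V = ∅ := by
        rw [hVeq']
        ext x
        simp only [Set.mem_preimage, Set.mem_singleton_iff, Set.mem_empty_iff_false, iff_false]
        rw [hconst x]
        exact hne0
      rw [this]
      exact isCompact_empty
  · rw [hVeq']
    exact part1 p' hov hdeg {0} isCompact_singleton
end
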